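/- For every N ≥ 1, the set of wavevectors compatible with some sublattice of ℤ² of index N equals {(2π l₁/N, 2π l₂/N) : 0 ≤ l₁, l₂ < N}. Precisely: q ∈ (ℝ/2πℤ)² lies in the dual (Brillouin zone) of some finite-index subgroup P ≤ ℤ² with [ℤ² : P] = N if and only if q = (2π l₁/N, 2π l₂/N) for some integers 0 ≤ l₁, l₂ < N. -/

import Mathlib

open Real

/-- `q` is compatible with the subgroup `P` of `ℤ²` if `⟨q, p⟩ ∈ 2πℤ` for all `p ∈ P`. -/
def Compatible (q : ℝ × ℝ) (P : AddSubgroup (ℤ × ℤ)) : Prop :=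
  ∀ p ∈ P, ∃ m : ℤ, q.1 * p.1 + q.2 * p.2 = 2 * π * m

lemma exists_subgroup_dvd (N : ℕ) (hN : 1 ≤ N) (a b : ℤ) :
    ∃ P : AddSubgroup (ℤ × ℤ), P.index = N ∧
      ∀ p ∈ P, ∃ u : ℤ, a * p.1 + b * p.2 = u * N := by
  by_cases h0 : a = 0 ∧ b = 0
  · refine ⟨(AddSubgroup.zmultiples (N : ℤ)).prod (⊤ : AddSubgroup ℤ), ?_, ?_⟩
    · simp [Int.index_zmultiples]
    · intro p _
      exact ⟨0, by simp [h0.1, h0.2]⟩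
  · set d : ℕ := Int.gcd a b with hd_def
    have hd0 : (d : ℤ) ≠ 0 := by
      simp only [hd_def, ne_eq, Int.natCast_eq_zero, Int.gcd_eq_zero_iff]
      tauto
    set r := Int.gcdA a b with hr_def
    set s := Int.gcdB a b with hs_def
    have hbez : (d : ℤ) = a * r + b * s := Int.gcd_eq_gcd_ab a b
    set A := a / (d : ℤ) with hA_def
    set B := b / (d : ℤ) with hB_def
    have hA : (d : ℤ) * A = a := Int.mul_ediv_cancel' (Int.gcd_dvd_left a b)
    have hB : (d : ℤ) * B = b := Int.mul_ediv_cancel' (Int.gcd_dvd_right a b)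
    have key : A * r + B * s = 1 := by
      have h : (d : ℤ) * (A * r + B * s) = (d : ℤ) * 1 := by
        linear_combination r * hA + s * hB - hbez
      exact mul_left_cancel₀ hd0 h
    -- the shear map
    set f : (ℤ × ℤ) →+ (ℤ × ℤ) := AddMonoidHom.mk'
      (fun p => (s * p.1 - r * p.2, A * p.1 + B * p.2))
      (by intro x y; simp only [Prod.fst_add, Prod.snd_add, Prod.mk_add_mk, Prod.mk.injEq]
          constructor <;> ring) with hf_def
    have hf : Function.Surjective f := by
      intro v
      refine ⟨(B * v.1 + r * v.2, -(A * v.1) + s * v.2), ?_⟩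
      simp only [hf_def, AddMonoidHom.mk'_apply]
      ext
      · show s * (B * v.1 + r * v.2) - r * (-(A * v.1) + s * v.2) = v.1
        linear_combination v.1 * key
      · show A * (B * v.1 + r * v.2) + B * (-(A * v.1) + s * v.2) = v.2
        linear_combination v.2 * key
    set γ : ℕ := Nat.gcd d N with hγ_def
    set β : ℕ := N / γ with hβ_def
    have hγd : γ ∣ d := Nat.gcd_dvd_left d N
    have hγβ : γ * β = N := Nat.mul_div_cancel' (Nat.gcd_dvd_right d N)
    refine ⟨((AddSubgroup.zmultiples (γ : ℤ)).prod (AddSubgroup.zmultiples (β : ℤ))).comap f,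
      ?_, ?_⟩
    · rw [AddSubgroup.index_comap_of_surjective _ hf]
      simp [Int.index_zmultiples, hγβ]
    · intro p hp
      simp only [AddSubgroup.mem_comap, AddSubgroup.mem_prod, Int.mem_zmultiples_iff,
        hf_def, AddMonoidHom.mk'_apply] at hp
      obtain ⟨u', hu⟩ := hp.2
      obtain ⟨e, he⟩ := hγd
      refine ⟨e * u', ?_⟩
      have hγβZ : (γ : ℤ) * (β : ℤ) = (N : ℤ) := by exact_mod_cast congrArg Nat.cast hγβ
      have heZ : (d : ℤ) = (γ : ℤ) * e := by exact_mod_cast congrArg Nat.cast he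
      have hu' : A * p.1 + B * p.2 = (β : ℤ) * u' := hu
      linear_combination -(p.1 * hA) - p.2 * hB + (d : ℤ) * hu' +
        (β : ℤ) * u' * heZ + e * u' * hγβZ

theorem dual_of_index_N_subgroups (N : ℕ) (hN : 1 ≤ N) (q : ℝ × ℝ) :
    (∃ P : AddSubgroup (ℤ × ℤ), P.index = N ∧ Compatible q P) ↔
      ∃ l₁ l₂ : ℤ, 0 ≤ l₁ ∧ l₁ < N ∧ 0 ≤ l₂ ∧ l₂ < N ∧
        ∃ m₁ m₂ : ℤ, q.1 = 2 * π * l₁ / N + 2 * π * m₁ ∧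
          q.2 = 2 * π * l₂ / N + 2 * π * m₂ := by
  have hNZ : (N : ℤ) ≠ 0 := by exact_mod_cast Nat.one_le_iff_ne_zero.mp hN
  have hNR : (N : ℝ) ≠ 0 := by exact_mod_cast hNZ
  have hNpos : (0 : ℤ) < N := by exact_mod_cast hN
  constructor
  · rintro ⟨P, hPi, hPc⟩
    have h1 : ((N : ℤ), (0 : ℤ)) ∈ P := by
      have h := P.nsmul_index_mem ((1 : ℤ), (0 : ℤ))
      rw [hPi] at h
      convert h using 1
      simp [Prod.ext_iff]
    have h2 : ((0 : ℤ), (N : ℤ)) ∈ P := by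
      have h := P.nsmul_index_mem ((0 : ℤ), (1 : ℤ))
      rw [hPi] at h
      convert h using 1
      simp [Prod.ext_iff]
    obtain ⟨a, ha⟩ := hPc _ h1
    obtain ⟨b, hb⟩ := hPc _ h2
    simp only [Int.cast_natCast, Int.cast_zero, mul_zero, add_zero, zero_add, mul_one] at ha hb
    refine ⟨a % N, b % N, Int.emod_nonneg a hNZ, Int.emod_lt_of_pos a hNpos,
      Int.emod_nonneg b hNZ, Int.emod_lt_of_pos b hNpos, a / N, b / N, ?_, ?_⟩
    · have hdm : (N : ℤ) * (a / N) + a % N = a := Int.mul_ediv_add_emod a N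
      have hdmR : (N : ℝ) * ((a / N : ℤ) : ℝ) + ((a % N : ℤ) : ℝ) = (a : ℝ) := by
        exact_mod_cast congrArg Int.cast hdm
      have key : q.1 * N = (2 * π * ((a % N : ℤ) : ℝ) / N + 2 * π * ((a / N : ℤ) : ℝ)) * N := by
        rw [ha, add_mul, div_mul_cancel₀ _ hNR]
        linear_combination (-(2 * π)) * hdmR
      exact mul_right_cancel₀ hNR key
    · have hdm : (N : ℤ) * (b / N) + b % N = b := Int.mul_ediv_add_emod b N
      have hdmR : (N : ℝ) * ((b / N : ℤ) : ℝ) + ((b % N : ℤ) : ℝ) = (b : ℝ) := by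
        exact_mod_cast congrArg Int.cast hdm
      have key : q.2 * N = (2 * π * ((b % N : ℤ) : ℝ) / N + 2 * π * ((b / N : ℤ) : ℝ)) * N := by
        rw [hb, add_mul, div_mul_cancel₀ _ hNR]
        linear_combination (-(2 * π)) * hdmR
      exact mul_right_cancel₀ hNR key
  · rintro ⟨l₁, l₂, _, _, _, _, m₁, m₂, hq1, hq2⟩
    obtain ⟨P, hPi, hPd⟩ := exists_subgroup_dvd N hN (l₁ + N * m₁) (l₂ + N * m₂)
    refine ⟨P, hPi, ?_⟩
    intro p hp
    obtain ⟨u, hu⟩ := hPd p hp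
    refine ⟨u, ?_⟩
    rw [hq1, hq2]
    have huR : ((l₁ + N * m₁ : ℤ) : ℝ) * p.1 + ((l₂ + N * m₂ : ℤ) : ℝ) * p.2
        = (u : ℝ) * N := by exact_mod_cast congrArg Int.cast hu
    push_cast at huR
    field_simp
    linear_combination huR
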